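/- Let μ > 0, n ∈ ℕ, and T(n) the tridiagonal matrix with diagonal 2j, subdiagonal μ, superdiagonal −μ. For all 1 ≤ i ≤ j ≤ n, the entry of the inverse satisfies |(T(n)^{-1})_{ij}| ≤ μ^{j−i}/(d_i d_{i+1} ⋯ d_j), where d_n = 2n and d_j = 2j + μ²/d_{j+1}. -/

import Mathlib

noncomputable def thA (μ : ℝ) : ℕ → ℝ
  | 0 => 1
  | 1 => 2
  | (k+2) => 2*((k:ℝ)+2) * thA μ (k+1) + μ^2 * thA μ k

noncomputable def psA (μ : ℝ) (n : ℕ) : ℕ → ℝ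
  | 0 => 1
  | 1 => 2*(n:ℝ)
  | (m+2) => 2*(((n - (m+1) : ℕ)) : ℝ) * psA μ n (m+1) + μ^2 * psA μ n m

noncomputable def MfA (μ : ℝ) (n : ℕ) (i j : ℕ) : ℝ :=
  if i ≤ j then μ^(j-i) * thA μ i * psA μ n (n-1-j) / psA μ n n
  else (-μ)^(i-j) * thA μ j * psA μ n (n-1-i) / psA μ n n

lemma thA_rec (μ : ℝ) (k : ℕ) (hk : 2 ≤ k) :
    thA μ k = 2*(k:ℝ) * thA μ (k-1) + μ^2 * thA μ (k-2) := by
  obtain ⟨m, rfl⟩ : ∃ m, k = m + 2 := ⟨k - 2, by omega⟩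
  simp [thA]

lemma psA_rec (μ : ℝ) (n t : ℕ) (ht : 2 ≤ t) :
    psA μ n t = 2*((n + 1 - t : ℕ) : ℝ) * psA μ n (t-1) + μ^2 * psA μ n (t-2) := by
  obtain ⟨m, rfl⟩ : ∃ m, t = m + 2 := ⟨t - 2, by omega⟩
  have h : n + 1 - (m+2) = n - (m+1) := by omega
  simp [psA, h]

lemma thA_pos (μ : ℝ) : ∀ k, 0 < thA μ k
  | 0 => by norm_num [thA]
  | 1 => by norm_num [thA]
  | (k+2) => by
      have h1 := thA_pos μ (k+1)
      have h2 := thA_pos μ k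
      have h3 : (0:ℝ) ≤ μ^2 := sq_nonneg μ
      have h4 : (0:ℝ) ≤ (k:ℝ) := Nat.cast_nonneg k
      simp only [thA]
      nlinarith

lemma psA_pos (μ : ℝ) (n : ℕ) : ∀ m, m ≤ n → 0 < psA μ n m
  | 0, _ => by norm_num [psA]
  | 1, h => by
      simp only [psA]
      have : (1:ℝ) ≤ (n:ℝ) := by exact_mod_cast h
      linarith
  | (m+2), h => by
      have h1 := psA_pos μ n (m+1) (by omega)
      have h2 := psA_pos μ n m (by omega)
      have hc : (1:ℝ) ≤ ((n - (m+1) : ℕ) : ℝ) := by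
        have : 1 ≤ n - (m+1) := by omega
        exact_mod_cast this
      have h3 : (0:ℝ) ≤ μ^2 := sq_nonneg μ
      simp only [psA]
      nlinarith

lemma psi_split (μ : ℝ) (n : ℕ) (k : ℕ) (hk1 : 1 ≤ k) (hkn : k + 1 ≤ n) :
    psA μ n n = thA μ k * psA μ n (n - k) + μ^2 * thA μ (k-1) * psA μ n (n - k - 1) := by
  induction k with
  | zero => omega
  | succ k ih =>
    rcases Nat.eq_or_lt_of_le hk1 with h1 | h1
    · have hk0 : k = 0 := by omega
      subst hk0
      have hrec := psA_rec μ n n (by omega)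
      rw [show n + 1 - n = 1 from by omega] at hrec
      rw [show n - 1 - 1 = n - 2 from by omega, show (1:ℕ) - 1 = 0 from rfl]
      rw [hrec]
      norm_num [thA]
    · have hk1' : 1 ≤ k := by omega
      have ih' := ih hk1' (by omega)
      have e1 := thA_rec μ (k+1) (by omega)
      rw [show k + 1 - 1 = k from by omega, show k + 1 - 2 = k - 1 from by omega] at e1
      have e2 := psA_rec μ n (n-k) (by omega)
      rw [show n + 1 - (n - k) = k + 1 from by omega] at e2
      rw [show n - (k+1) = n - k - 1 from by omega, show k + 1 - 1 = k from by omega]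
      rw [show n - k - 2 = n - k - 1 - 1 from by omega] at e2
      linear_combination ih' + thA μ k * e2 - psA μ n (n-k-1) * e1

lemma theta_eq_psi (μ : ℝ) (n : ℕ) (hn : 1 ≤ n) : thA μ n = psA μ n n := by
  rcases Nat.lt_or_ge n 2 with h | h
  · have : n = 1 := by omega
    subst this
    norm_num [thA, psA]
  · have hs := psi_split μ n (n-1) (by omega) (by omega)
    rw [show n - (n-1) = 1 from by omega, show (1:ℕ) - 1 = 0 from by omega,
        show n - 1 - 1 = n - 2 from by omega] at hs
    have e1 := thA_rec μ n h
    simp only [psA] at hs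
    linear_combination e1 - hs

lemma d_psi (μ : ℝ) (n : ℕ) (d : ℕ → ℝ)
    (hdn : d n = 2*n) (hdrec : ∀ j, 1 ≤ j → j < n → d j = 2*j + μ^2 / d (j+1))
    (hdpos : ∀ j, 1 ≤ j → j ≤ n → 0 < d j) :
    ∀ t, t + 1 ≤ n → d (n - t) * psA μ n t = psA μ n (t+1) := by
  intro t
  induction t with
  | zero =>
    intro h
    simp [psA, hdn]
  | succ t ih =>
    intro h
    have ih' := ih (by omega)
    have hl : 1 ≤ n - (t+1) := by omega
    have hrec := hdrec (n - (t+1)) hl (by omega)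
    rw [show n - (t+1) + 1 = n - t from by omega] at hrec
    have hdp : 0 < d (n - t) := hdpos _ (by omega) (by omega)
    have hps : psA μ n (t+2) = 2*((n+1-(t+2):ℕ):ℝ) * psA μ n (t+1) + μ^2 * psA μ n t :=
      psA_rec μ n (t+2) (by omega)
    rw [show n+1-(t+2) = n-(t+1) from by omega] at hps
    rw [hrec, hps]
    have hne : d (n - t) ≠ 0 := ne_of_gt hdp
    field_simp
    linear_combination -μ^2 * ih'

lemma prod_d (μ : ℝ) (n : ℕ) (d : ℕ → ℝ)
    (hdn : d n = 2*n) (hdrec : ∀ j, 1 ≤ j → j < n → d j = 2*j + μ^2 / d (j+1))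
    (hdpos : ∀ j, 1 ≤ j → j ≤ n → 0 < d j)
    (I J : ℕ) (hI : 1 ≤ I) (hIJ : I ≤ J) :
    J ≤ n → (∏ l ∈ Finset.Icc I J, d l) * psA μ n (n - J) = psA μ n (n + 1 - I) := by
  induction J, hIJ using Nat.le_induction with
  | base =>
    intro hJ
    rw [Finset.Icc_self, Finset.prod_singleton]
    have h := d_psi μ n d hdn hdrec hdpos (n - I) (by omega)
    rw [show n - (n - I) = I from by omega, show n - I + 1 = n + 1 - I from by omega] at h
    exact h
  | succ J hIJ ih =>
    intro hJ
    have ih' := ih (by omega)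
    rw [Finset.prod_Icc_succ_top (by omega : I ≤ J + 1)]
    have hd := d_psi μ n d hdn hdrec hdpos (n - (J+1)) (by omega)
    rw [show n - (n - (J+1)) = J + 1 from by omega, show n - (J+1) + 1 = n - J from by omega] at hd
    rw [mul_assoc, hd, ih']

lemma key (μ : ℝ) (n i j : ℕ) (hi : i < n) (hj : j < n) :
    2*((i:ℝ)+1) * MfA μ n i j
      + (if 1 ≤ i then μ * MfA μ n (i-1) j else 0)
      + (if i+1 < n then -μ * MfA μ n (i+1) j else 0)
    = if i = j then 1 else 0 := by
  have hD : 0 < psA μ n n := psA_pos μ n n le_rfl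
  have hDne : psA μ n n ≠ 0 := ne_of_gt hD
  rcases Nat.lt_trichotomy i j with hij | hij | hij
  · -- i < j : result 0
    rw [if_pos (by omega : i+1 < n), if_neg (by omega : ¬ i = j)]
    simp only [MfA]
    rw [if_pos (by omega : i ≤ j), if_pos (by omega : i-1 ≤ j), if_pos (by omega : i+1 ≤ j)]
    rcases Nat.eq_zero_or_pos i with h0 | h0
    · subst h0
      rw [if_neg (by omega : ¬ 1 ≤ 0)]
      rw [show j - 0 = (j - (0+1)) + 1 from by omega]
      norm_num [thA, pow_succ]
      ring
    · rw [if_pos (show 1 ≤ i from h0)]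
      have e1 := thA_rec μ (i+1) (by omega)
      rw [show i+1-1 = i from by omega, show i+1-2 = i-1 from by omega] at e1
      rw [show j - (i-1) = (j - (i+1)) + 2 from by omega,
          show j - i = (j-(i+1)) + 1 from by omega, e1]
      push_cast
      field_simp
      ring
  · -- i = j : result 1
    subst hij
    rw [if_pos rfl]
    by_cases h3 : i+1 < n
    · rw [if_pos h3]
      have hs := psi_split μ n (i+1) (by omega) (by omega)
      rw [show n-(i+1)-1 = n-1-(i+1) from by omega,
          show n-(i+1) = n-1-i from by omega,
          show i+1-1 = i from by omega] at hs
      rcases Nat.eq_zero_or_pos i with h0 | h0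
      · subst h0
        rw [if_neg (by omega : ¬ 1 ≤ 0)]
        simp only [MfA]
        rw [if_pos (le_refl 0), if_neg (by omega : ¬ 0+1 ≤ 0)]
        rw [show (0:ℕ) - 0 = 0 from rfl, show 0+1-0 = 1 from rfl]
        norm_num [thA] at hs ⊢
        field_simp
        linear_combination -hs
      · rw [if_pos (show 1 ≤ i from h0)]
        have e1 := thA_rec μ (i+1) (by omega)
        rw [show i+1-1 = i from by omega, show i+1-2 = i-1 from by omega] at e1
        simp only [MfA]
        rw [if_pos (le_refl i), if_pos (by omega : i-1 ≤ i), if_neg (by omega : ¬ i+1 ≤ i)]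
        rw [show i - i = 0 from by omega, show i - (i-1) = 1 from by omega,
            show i+1-i = 1 from by omega]
        push_cast at e1 hs ⊢
        field_simp
        linear_combination -hs - psA μ n (n-1-i) * e1
    · -- i+1 = n
      have hn : n = i+1 := by omega
      subst hn
      rw [if_neg h3]
      rcases Nat.eq_zero_or_pos i with h0 | h0
      · subst h0
        rw [if_neg (by omega : ¬ 1 ≤ 0)]
        norm_num [MfA, thA, psA]
      · rw [if_pos (show 1 ≤ i from h0)]
        simp only [MfA]
        rw [if_pos (le_refl i), if_pos (by omega : i-1 ≤ i)]
        rw [show i - i = 0 from by omega, show i - (i-1) = 1 from by omega,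
            show i+1-1-i = 0 from by omega]
        have e1 := thA_rec μ (i+1) (by omega)
        rw [show i+1-1 = i from by omega, show i+1-2 = i-1 from by omega] at e1
        have he := theta_eq_psi μ (i+1) (by omega)
        norm_num [psA] at *
        push_cast at e1 ⊢
        field_simp
        linear_combination he - e1
  · -- i > j : result 0
    rw [if_neg (by omega : ¬ i = j), if_pos (by omega : 1 ≤ i)]
    by_cases h3 : i+1 < n
    · rw [if_pos h3]
      by_cases hd1 : i = j+1
      · subst hd1
        simp only [MfA]
        rw [if_neg (by omega : ¬ j+1 ≤ j), if_pos (by omega : j+1-1 ≤ j),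
            if_neg (by omega : ¬ j+1+1 ≤ j)]
        rw [show j - (j+1-1) = 0 from by omega, show j+1-j = 1 from by omega,
            show j+1+1-j = 2 from by omega, show j+1-1 = j from by omega]
        have e2 := psA_rec μ n (n-1-j) (by omega)
        rw [show n+1-(n-1-j) = j+2 from by omega,
            show n-1-j-1 = n-1-(j+1) from by omega,
            show n-1-j-2 = n-1-(j+1+1) from by omega] at e2
        push_cast at e2 ⊢
        field_simp
        linear_combination μ * thA μ j * e2
      · -- i > j+1
        simp only [MfA]
        rw [if_neg (by omega : ¬ i ≤ j), if_neg (by omega : ¬ i-1 ≤ j),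
            if_neg (by omega : ¬ i+1 ≤ j)]
        have e2 := psA_rec μ n (n-i) (by omega)
        rw [show n+1-(n-i) = i+1 from by omega, show n-i-1 = n-1-i from by omega,
            show n-i-2 = n-1-(i+1) from by omega] at e2
        rw [show n-1-(i-1) = n-i from by omega,
            show i-j = (i-1-j)+1 from by omega, show i+1-j = (i-1-j)+2 from by omega]
        push_cast at e2 ⊢
        field_simp
        linear_combination μ * (-1)^(i-1-j) * μ^(i-1-j) * thA μ j * e2
    · -- i+1 = n
      have hn : n = i+1 := by omega
      subst hn
      rw [if_neg h3]
      by_cases hd1 : i = j+1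
      · subst hd1
        simp only [MfA]
        rw [if_neg (by omega : ¬ j+1 ≤ j), if_pos (by omega : j+1-1 ≤ j)]
        rw [show j+1-1 = j from by omega, show j - j = 0 from by omega,
            show j+1-j = 1 from by omega,
            show j+1+1-1-(j+1) = 0 from by omega, show j+1+1-1-j = 1 from by omega]
        have h1 : psA μ (j+1+1) 0 = 1 := by norm_num [psA]
        have h2 : psA μ (j+1+1) 1 = 2*((j:ℝ)+2) := by norm_num [psA]; push_cast; ring
        rw [h1, h2]
        field_simp
        push_cast; ring
      · simp only [MfA]
        rw [if_neg (by omega : ¬ i ≤ j), if_neg (by omega : ¬ i-1 ≤ j)]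
        rw [show i+1-1-i = 0 from by omega, show i+1-1-(i-1) = 1 from by omega,
            show i-j = (i-1-j)+1 from by omega]
        norm_num [psA, pow_succ]
        push_cast
        field_simp
        ring

lemma sum_g (μ : ℝ) (n i j : ℕ) (hi : i < n) :
    ∑ k ∈ Finset.range n,
      ((if i = k then 2*((k:ℝ)+1) else if i = k+1 then μ else if k = i+1 then -μ else 0)
        * MfA μ n k j)
    = 2*((i:ℝ)+1) * MfA μ n i j
      + (if 1 ≤ i then μ * MfA μ n (i-1) j else 0)
      + (if i+1 < n then -μ * MfA μ n (i+1) j else 0) := by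
  have hpt : ∀ k : ℕ,
      ((if i = k then 2*((k:ℝ)+1) else if i = k+1 then μ else if k = i+1 then -μ else 0)
        * MfA μ n k j)
      = (if k = i then 2*((i:ℝ)+1) * MfA μ n i j else 0)
        + (if 1 ≤ i then (if k = i-1 then μ * MfA μ n (i-1) j else 0) else 0)
        + (if k = i+1 then -μ * MfA μ n (i+1) j else 0) := by
    intro k
    rcases Nat.lt_trichotomy k i with h | h | h
    · rw [if_neg (by omega : ¬ i = k), if_neg (by omega : ¬ k = i),
          if_neg (by omega : ¬ k = i+1)]
      by_cases h2 : i = k+1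
      · rw [if_pos h2, if_neg (by omega : ¬ k = i+1), if_pos (by omega : 1 ≤ i),
            if_pos (by omega : k = i-1), show i-1 = k from by omega]
        ring
      · rw [if_neg h2, if_neg (by omega : ¬ k = i+1)]
        by_cases h1 : 1 ≤ i
        · rw [if_pos h1, if_neg (by omega : ¬ k = i-1)]; ring
        · rw [if_neg h1]; ring
    · subst h
      rw [if_pos rfl, if_pos rfl, if_neg (by omega : ¬ k = k+1)]
      have hm : (if 1 ≤ k then (if k = k-1 then μ * MfA μ n (k-1) j else 0) else 0) = 0 := by
        by_cases h1 : 1 ≤ k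
        · rw [if_pos h1, if_neg (by omega : ¬ k = k-1)]
        · rw [if_neg h1]
      rw [hm]
      ring
    · rw [if_neg (by omega : ¬ i = k), if_neg (by omega : ¬ i = k+1),
          if_neg (by omega : ¬ k = i)]
      have hm : (if 1 ≤ i then (if k = i-1 then μ * MfA μ n (i-1) j else 0) else 0) = 0 := by
        by_cases h1 : 1 ≤ i
        · rw [if_pos h1, if_neg (by omega : ¬ k = i-1)]
        · rw [if_neg h1]
      rw [hm]
      by_cases h2 : k = i+1
      · rw [if_pos h2, if_pos h2, h2]; ring
      · rw [if_neg h2, if_neg h2]; ring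
  rw [Finset.sum_congr rfl fun k _ => hpt k]
  rw [Finset.sum_add_distrib, Finset.sum_add_distrib]
  congr 1
  · congr 1
    · rw [Finset.sum_ite_eq' (Finset.range n) i fun _ => 2*((i:ℝ)+1) * MfA μ n i j]
      rw [if_pos (Finset.mem_range.mpr hi)]
    · by_cases h1 : 1 ≤ i
      · simp only [if_pos h1]
        rw [Finset.sum_ite_eq' (Finset.range n) (i-1) fun _ => μ * MfA μ n (i-1) j]
        rw [if_pos (Finset.mem_range.mpr (by omega))]
      · simp only [if_neg h1, Finset.sum_const_zero]
  · rw [Finset.sum_ite_eq' (Finset.range n) (i+1) fun _ => -μ * MfA μ n (i+1) j]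
    simp only [Finset.mem_range]

lemma TM_one (μ : ℝ) (n : ℕ) (T : Matrix (Fin n) (Fin n) ℝ)
    (hT : ∀ i j : Fin n, T i j =
      if (i : ℕ) = j then (2 * ((j : ℕ) + 1) : ℝ)
      else if (i : ℕ) = (j : ℕ) + 1 then μ
      else if (j : ℕ) = (i : ℕ) + 1 then -μ
      else 0) :
    T * (Matrix.of fun a b : Fin n => MfA μ n (a:ℕ) (b:ℕ)) = 1 := by
  ext i j
  rw [Matrix.mul_apply]
  have h1 : ∀ k : Fin n, T i k * (Matrix.of fun a b : Fin n => MfA μ n (a:ℕ) (b:ℕ)) k j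
      = (fun kk : ℕ =>
          (if (i:ℕ) = kk then 2*((kk:ℝ)+1)
            else if (i:ℕ) = kk+1 then μ else if kk = (i:ℕ)+1 then -μ else 0)
          * MfA μ n kk (j:ℕ)) (k:ℕ) := by
    intro k
    rw [hT]
    simp only [Matrix.of_apply]
  rw [Finset.sum_congr rfl fun k _ => h1 k]
  rw [Fin.sum_univ_eq_sum_range
    (fun kk : ℕ =>
      (if (i:ℕ) = kk then 2*((kk:ℝ)+1)
        else if (i:ℕ) = kk+1 then μ else if kk = (i:ℕ)+1 then -μ else 0)
      * MfA μ n kk (j:ℕ)) n]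
  rw [sum_g μ n (i:ℕ) (j:ℕ) i.isLt, key μ n (i:ℕ) (j:ℕ) i.isLt j.isLt]
  rw [Matrix.one_apply]
  by_cases h : i = j
  · rw [if_pos h, if_pos (by rw [h])]
  · rw [if_neg h, if_neg (by simpa [Fin.ext_iff] using h)]

theorem stmt_10 (μ : ℝ) (hμ : 0 < μ) (n : ℕ)
    (T : Matrix (Fin n) (Fin n) ℝ)
    (hT : ∀ i j : Fin n, T i j =
      if (i : ℕ) = j then (2 * ((j : ℕ) + 1) : ℝ)
      else if (i : ℕ) = (j : ℕ) + 1 then μ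
      else if (j : ℕ) = (i : ℕ) + 1 then -μ
      else 0)
    (d : ℕ → ℝ)
    (hdn : d n = 2 * n)
    (hdrec : ∀ j : ℕ, 1 ≤ j → j < n → d j = 2 * j + μ ^ 2 / d (j + 1))
    (hdpos : ∀ j : ℕ, 1 ≤ j → j ≤ n → 0 < d j) :
    ∀ i j : Fin n, (i : ℕ) ≤ j →
      |T⁻¹ i j| ≤ μ ^ ((j : ℕ) - i) / ∏ l ∈ Finset.Icc ((i : ℕ) + 1) ((j : ℕ) + 1), d l := by
  intro i j hij
  have hi' : (i:ℕ) < n := i.isLt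
  have hj' : (j:ℕ) < n := j.isLt
  have hD : 0 < psA μ n n := psA_pos μ n n le_rfl
  have hM : T * (Matrix.of fun a b : Fin n => MfA μ n (a:ℕ) (b:ℕ)) = 1 := TM_one μ n T hT
  have hinv := Matrix.inv_eq_right_inv hM
  rw [hinv]
  simp only [Matrix.of_apply]
  have hentry : MfA μ n (i:ℕ) (j:ℕ)
      = μ^((j:ℕ)-(i:ℕ)) * thA μ (i:ℕ) * psA μ n (n-1-(j:ℕ)) / psA μ n n := by
    rw [MfA, if_pos hij]
  rw [hentry]
  have hθ := thA_pos μ (i:ℕ)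
  have hψ := psA_pos μ n (n-1-(j:ℕ)) (by omega)
  have hpow : 0 < μ^((j:ℕ)-(i:ℕ)) := pow_pos hμ _
  have hnum : 0 < μ^((j:ℕ)-(i:ℕ)) * thA μ (i:ℕ) * psA μ n (n-1-(j:ℕ)) :=
    mul_pos (mul_pos hpow hθ) hψ
  rw [abs_of_nonneg (div_nonneg hnum.le hD.le)]
  have hP := prod_d μ n d hdn hdrec hdpos ((i:ℕ)+1) ((j:ℕ)+1) (by omega) (by omega) (by omega)
  rw [show n - ((j:ℕ)+1) = n-1-(j:ℕ) from by omega,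
      show n + 1 - ((i:ℕ)+1) = n - (i:ℕ) from by omega] at hP
  have hPpos : 0 < ∏ l ∈ Finset.Icc ((i:ℕ)+1) ((j:ℕ)+1), d l :=
    Finset.prod_pos (fun l hl => by
      rw [Finset.mem_Icc] at hl
      exact hdpos l (by omega) (by omega))
  have hkey : thA μ (i:ℕ) * psA μ n (n - (i:ℕ)) ≤ psA μ n n := by
    rcases Nat.eq_zero_or_pos (i:ℕ) with h0 | h0
    · rw [h0]
      simp [thA]
    · have hs := psi_split μ n (i:ℕ) h0 (by omega)
      have t1 := thA_pos μ ((i:ℕ)-1)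
      have t2 := psA_pos μ n (n - (i:ℕ) - 1) (by omega)
      have hx : 0 ≤ μ^2 * thA μ ((i:ℕ)-1) * psA μ n (n - (i:ℕ) - 1) := by positivity
      linarith [hs, hx]
  rw [div_le_div_iff₀ hD hPpos]
  have h2 : μ^((j:ℕ)-(i:ℕ)) * thA μ (i:ℕ) * psA μ n (n-1-(j:ℕ))
        * (∏ l ∈ Finset.Icc ((i:ℕ)+1) ((j:ℕ)+1), d l)
      = μ^((j:ℕ)-(i:ℕ)) * (thA μ (i:ℕ) * psA μ n (n-(i:ℕ))) := by
    linear_combination μ^((j:ℕ)-(i:ℕ)) * thA μ (i:ℕ) * hP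
  rw [h2]
  exact mul_le_mul_of_nonneg_left hkey hpow.le
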